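/- For every integer n ≥ 1 and every real number p > 0 with p ≠ 1, there exist real numbers a > 0 and b > 0 such that (bⁿ(b+1)/a) · B(p+1, (b+1)n/a) > (a^{n−1}(a+1) · B(p+1, (a+1)n/a))^{p/(n+p)} · (b^{n−1}(b+1) · B(p+1, (b+1)n/b))^{n/(n+p)}. (Since the quaternionic p-energies of the functions u_a(q) = ‖q‖^{2a} − 1 on the unit ball of ℍⁿ satisfy ∫(−u_a)^p(Δu_b)ⁿ = C·(bⁿ(b+1)/a)·B(p+1,(b+1)n/a) for a dimensional constant C, this shows the optimal constant C_p in the energy estimate e_p(u_0,…,u_n) ≤ C_p·e_p(u_0)^{p/(n+p)}·e_p(u_1)^{1/(n+p)}···e_p(u_n)^{1/(n+p)} is strictly greater than 1 when p ≠ 1.) -/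

import Mathlib

/-- The Beta function `B(x,y) = ∫₀¹ t^(x-1) (1-t)^(y-1) dt`. -/
noncomputable def Beta (x y : ℝ) : ℝ := ∫ t in (0:ℝ)..1, t ^ (x - 1) * (1 - t) ^ (y - 1)


open Real

lemma ofReal_Beta {x y : ℝ} (hx : 0 < x) (hy : 0 < y) :
    ((Beta x y : ℝ) : ℂ) = Complex.betaIntegral x y := by
  rw [Beta, Complex.betaIntegral, ← intervalIntegral.integral_ofReal]
  refine intervalIntegral.integral_congr (fun t ht => ?_)
  rw [Set.uIcc_of_le (by norm_num : (0:ℝ) ≤ 1)] at ht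
  obtain ⟨h0, h1⟩ := ht
  push_cast
  rw [Complex.ofReal_cpow h0, Complex.ofReal_cpow (by linarith)]
  push_cast
  ring

lemma Beta_eq {x y : ℝ} (hx : 0 < x) (hy : 0 < y) :
    Beta x y = Real.Gamma x * Real.Gamma y / Real.Gamma (x + y) := by
  have h := Complex.Gamma_mul_Gamma_eq_betaIntegral
    (s := (x:ℂ)) (t := (y:ℂ)) (by simpa using hx) (by simpa using hy)
  have h2 : ((Real.Gamma x * Real.Gamma y : ℝ) : ℂ)
      = ((Real.Gamma (x + y) * Beta x y : ℝ) : ℂ) := by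
    rw [Complex.ofReal_mul, Complex.ofReal_mul, ← Complex.Gamma_ofReal,
      ← Complex.Gamma_ofReal, ← Complex.Gamma_ofReal, ofReal_Beta hx hy,
      Complex.ofReal_add]
    exact h
  have h3 := Complex.ofReal_inj.mp h2
  have h4 : Real.Gamma (x + y) ≠ 0 := (Real.Gamma_pos_of_pos (by linarith)).ne'
  field_simp
  linarith [h3]

lemma Beta_pos {x y : ℝ} (hx : 0 < x) (hy : 0 < y) : 0 < Beta x y := by
  rw [Beta_eq hx hy]
  exact div_pos (mul_pos (Real.Gamma_pos_of_pos hx) (Real.Gamma_pos_of_pos hy))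
    (Real.Gamma_pos_of_pos (by linarith))

noncomputable def psi (y : ℝ) : ℝ := deriv (fun t => Real.log (Real.Gamma t)) y

lemma hasDerivAt_logGamma {y : ℝ} (hy : 0 < y) :
    HasDerivAt (fun t => Real.log (Real.Gamma t)) (psi y) y := by
  have h1 : DifferentiableAt ℝ Real.Gamma y :=
    Real.differentiableAt_Gamma (fun m => by
      have : (0:ℝ) ≤ m := Nat.cast_nonneg m
      intro hc; rw [hc] at hy; linarith)
  exact (h1.log (Real.Gamma_pos_of_pos hy).ne').hasDerivAt

lemma psi_add_one {y : ℝ} (hy : 0 < y) : psi (y + 1) = psi y + 1 / y := by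
  have hA : HasDerivAt (fun t : ℝ => Real.log (Real.Gamma (t + 1))) (psi (y + 1) * 1) y :=
    (hasDerivAt_logGamma (by linarith)).comp y ((hasDerivAt_id y).add_const 1)
  have hB : HasDerivAt (fun t : ℝ => Real.log t + Real.log (Real.Gamma t)) (y⁻¹ + psi y) y :=
    (Real.hasDerivAt_log hy.ne').add (hasDerivAt_logGamma hy)
  have heq : (fun t : ℝ => Real.log (Real.Gamma (t + 1)))
      =ᶠ[nhds y] (fun t : ℝ => Real.log t + Real.log (Real.Gamma t)) := by
    filter_upwards [Ioi_mem_nhds hy] with t ht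
    rw [Real.Gamma_add_one (ne_of_gt ht),
      Real.log_mul (ne_of_gt ht) (Real.Gamma_pos_of_pos ht).ne']
  have hA' := hA.congr_of_eventuallyEq heq.symm
  have := hA'.unique hB
  rw [mul_one] at this
  rw [this, one_div]
  ring

noncomputable def Gfun (n : ℕ) (p b : ℝ) : ℝ → ℝ := fun a =>
  Real.log (b ^ n * (b + 1)) - Real.log a
    + (Real.log (Real.Gamma (p + 1)) + Real.log (Real.Gamma ((b + 1) * n / a))
        - Real.log (Real.Gamma ((b + 1) * n / a + (p + 1))))
    - p / (n + p) *
      (((n - 1 : ℕ) : ℝ) * Real.log a + Real.log (a + 1)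
        + (Real.log (Real.Gamma (p + 1)) + Real.log (Real.Gamma ((n : ℝ) + n / a))
            - Real.log (Real.Gamma ((n : ℝ) + n / a + (p + 1)))))

lemma hasDerivAt_Gfun {n : ℕ} {p b : ℝ} (hn : 1 ≤ n) (hp : 0 < p) (hb : 0 < b) :
    HasDerivAt (Gfun n p b)
      ((0 - b⁻¹
        + (0 + psi ((b + 1) * n / b) * ((b + 1) * n * -(b ^ 2)⁻¹)
            - psi ((b + 1) * n / b + (p + 1)) * ((b + 1) * n * -(b ^ 2)⁻¹)))
        - p / (n + p) *
          (((n - 1 : ℕ) : ℝ) * b⁻¹ + (b + 1)⁻¹ * 1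
            + (0 + psi ((n : ℝ) + n / b) * ((n : ℝ) * -(b ^ 2)⁻¹)
                - psi ((n : ℝ) + n / b + (p + 1)) * ((n : ℝ) * -(b ^ 2)⁻¹)))) b := by
  have hN : (0:ℝ) < n := by exact_mod_cast Nat.lt_of_lt_of_le Nat.zero_lt_one hn
  have hb1 : (0:ℝ) < b + 1 := by linarith
  have hW : (0:ℝ) < (b + 1) * n / b := div_pos (mul_pos hb1 hN) hb
  have hWq : (0:ℝ) < (b + 1) * n / b + (p + 1) := by linarith
  have hNb : (0:ℝ) < (n : ℝ) + n / b := add_pos hN (div_pos hN hb)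
  have hNbq : (0:ℝ) < (n : ℝ) + n / b + (p + 1) := by linarith
  have hinv : HasDerivAt (fun a : ℝ => a⁻¹) (-(b ^ 2)⁻¹) b := hasDerivAt_inv hb.ne'
  have hca : HasDerivAt (fun a : ℝ => (b + 1) * (n : ℝ) / a) ((b + 1) * (n : ℝ) * -(b ^ 2)⁻¹) b := by
    simpa only [div_eq_mul_inv] using hinv.const_mul ((b + 1) * (n : ℝ))
  have hca2 : HasDerivAt (fun a : ℝ => (b + 1) * (n : ℝ) / a + (p + 1))
      ((b + 1) * (n : ℝ) * -(b ^ 2)⁻¹) b := hca.add_const (p + 1)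
  have hna : HasDerivAt (fun a : ℝ => (n : ℝ) + (n : ℝ) / a) ((n : ℝ) * -(b ^ 2)⁻¹) b := by
    simpa only [div_eq_mul_inv] using (hinv.const_mul (n : ℝ)).const_add (n : ℝ)
  have hna2 : HasDerivAt (fun a : ℝ => (n : ℝ) + (n : ℝ) / a + (p + 1))
      ((n : ℝ) * -(b ^ 2)⁻¹) b := hna.add_const (p + 1)
  have hg1 : HasDerivAt (fun a : ℝ => Real.log (Real.Gamma ((b + 1) * (n : ℝ) / a)))
      (psi ((b + 1) * n / b) * ((b + 1) * (n : ℝ) * -(b ^ 2)⁻¹)) b :=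
    (hasDerivAt_logGamma hW).comp b hca
  have hg2 : HasDerivAt (fun a : ℝ => Real.log (Real.Gamma ((b + 1) * (n : ℝ) / a + (p + 1))))
      (psi ((b + 1) * n / b + (p + 1)) * ((b + 1) * (n : ℝ) * -(b ^ 2)⁻¹)) b :=
    by have := (hasDerivAt_logGamma hWq).comp b hca2; exact this
  have hg3 : HasDerivAt (fun a : ℝ => Real.log (Real.Gamma ((n : ℝ) + (n : ℝ) / a)))
      (psi ((n : ℝ) + n / b) * ((n : ℝ) * -(b ^ 2)⁻¹)) b :=
    by have := (hasDerivAt_logGamma hNb).comp b hna; exact this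
  have hg4 : HasDerivAt (fun a : ℝ => Real.log (Real.Gamma ((n : ℝ) + (n : ℝ) / a + (p + 1))))
      (psi ((n : ℝ) + n / b + (p + 1)) * ((n : ℝ) * -(b ^ 2)⁻¹)) b :=
    by have := (hasDerivAt_logGamma hNbq).comp b hna2; exact this
  have hloga : HasDerivAt (fun a : ℝ => Real.log a) b⁻¹ b := Real.hasDerivAt_log hb.ne'
  have hl1 : HasDerivAt (fun a : ℝ => Real.log (a + 1)) ((b + 1)⁻¹ * 1) b :=
    by have := (Real.hasDerivAt_log hb1.ne').comp b ((hasDerivAt_id b).add_const 1); exact this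
  have hlm : HasDerivAt (fun a : ℝ => ((n - 1 : ℕ) : ℝ) * Real.log a)
      (((n - 1 : ℕ) : ℝ) * b⁻¹) b := hloga.const_mul _
  unfold Gfun
  exact (((hasDerivAt_const b _).sub hloga).add
      (((hasDerivAt_const b _).add hg1).sub hg2)).sub
    ((((hlm.add hl1)).add (((hasDerivAt_const b _).add hg3).sub hg4)).const_mul (p / ((n : ℝ) + p)))

lemma key (n : ℕ) (hn : 1 ≤ n) (p : ℝ) (hp : 0 < p)
    (H : ∀ a b : ℝ, 0 < a → 0 < b →
      (b ^ n * (b + 1) / a) * Beta (p + 1) ((b + 1) * n / a) ≤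
        (a ^ (n - 1) * (a + 1) * Beta (p + 1) ((a + 1) * n / a)) ^ (p / ((n : ℝ) + p)) *
          (b ^ (n - 1) * (b + 1) * Beta (p + 1) ((b + 1) * n / b)) ^ ((n : ℝ) / ((n : ℝ) + p)))
    (b : ℝ) (hb : 0 < b) :
    psi ((b + 1) * n / b) - psi ((b + 1) * n / b + (p + 1)) =
      -(((1 + p) * ((b + 1) * n / b) + p) /
        (((b + 1) * n / b) * ((b + 1) * n / b + p))) := by
  have hN : (0:ℝ) < n := by exact_mod_cast Nat.lt_of_lt_of_le Nat.zero_lt_one hn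
  have hNp : (0:ℝ) < (n : ℝ) + p := by linarith
  have hq : (0:ℝ) < p + 1 := by linarith
  have hb1 : (0:ℝ) < b + 1 := by linarith
  -- the function Gfun equals the relevant log-expression for positive a
  have hFG : ∀ a : ℝ, 0 < a → Gfun n p b a =
      Real.log (b ^ n * (b + 1) / a * Beta (p + 1) ((b + 1) * n / a)) -
        p / ((n : ℝ) + p) *
          Real.log (a ^ (n - 1) * (a + 1) * Beta (p + 1) ((a + 1) * n / a)) := by
    intro a ha
    have ha1 : (0:ℝ) < a + 1 := by linarith
    have harg : ((a : ℝ) + 1) * n / a = (n : ℝ) + n / a := by field_simp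
    have hy1 : (0:ℝ) < (b + 1) * n / a := div_pos (mul_pos hb1 hN) ha
    have hy2 : (0:ℝ) < (n : ℝ) + n / a := add_pos hN (div_pos hN ha)
    have hy2q : (0:ℝ) < (n : ℝ) + n / a + (p + 1) := by linarith
    have hy1q : (0:ℝ) < (b + 1) * n / a + (p + 1) := by linarith
    rw [harg, Beta_eq hq hy1, Beta_eq hq hy2,
      show p + 1 + ((b + 1) * (n:ℝ) / a) = (b + 1) * (n:ℝ) / a + (p + 1) from add_comm _ _,
      show p + 1 + ((n:ℝ) + (n:ℝ) / a) = ((n:ℝ) + (n:ℝ) / a) + (p + 1) from add_comm _ _]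
    have h1 : b ^ n * (b + 1) ≠ 0 := by positivity
    have h2 : a ≠ 0 := ha.ne'
    have h3 : b ^ n * (b + 1) / a ≠ 0 := by positivity
    have h4 : b ^ n ≠ 0 := by positivity
    have h5 : (b:ℝ) + 1 ≠ 0 := hb1.ne'
    have h6 : (a:ℝ) + 1 ≠ 0 := ha1.ne'
    have hGq : Real.Gamma (p + 1) ≠ 0 := (Real.Gamma_pos_of_pos hq).ne'
    have hG1 : Real.Gamma ((b + 1) * n / a) ≠ 0 := (Real.Gamma_pos_of_pos hy1).ne'
    have hG1q : Real.Gamma ((b + 1) * n / a + (p + 1)) ≠ 0 := (Real.Gamma_pos_of_pos hy1q).ne'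
    have hG2 : Real.Gamma ((n : ℝ) + n / a) ≠ 0 := (Real.Gamma_pos_of_pos hy2).ne'
    have hG2q : Real.Gamma ((n : ℝ) + n / a + (p + 1)) ≠ 0 := (Real.Gamma_pos_of_pos hy2q).ne'
    have hP1 : Real.Gamma (p + 1) * Real.Gamma ((b + 1) * n / a) ≠ 0 := mul_ne_zero hGq hG1
    have hP2 : Real.Gamma (p + 1) * Real.Gamma ((n : ℝ) + n / a) ≠ 0 := mul_ne_zero hGq hG2
    have hQ1 : Real.Gamma (p + 1) * Real.Gamma ((b + 1) * n / a) /
        Real.Gamma ((b + 1) * n / a + (p + 1)) ≠ 0 := div_ne_zero hP1 hG1q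
    have hQ2 : Real.Gamma (p + 1) * Real.Gamma ((n : ℝ) + n / a) /
        Real.Gamma ((n : ℝ) + n / a + (p + 1)) ≠ 0 := div_ne_zero hP2 hG2q
    have hA1 : a ^ (n - 1) ≠ 0 := by positivity
    have hA3 : a ^ (n - 1) * (a + 1) ≠ 0 := mul_ne_zero hA1 h6
    unfold Gfun
    rw [Real.log_mul h3 hQ1, Real.log_div h1 h2, Real.log_div hP1 hG1q,
      Real.log_mul hGq hG1, Real.log_mul hA3 hQ2, Real.log_mul hA1 h6,
      Real.log_div hP2 hG2q, Real.log_mul hGq hG2, Real.log_pow]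
  -- Gfun has a local max at b
  have hLb : b ^ n * (b + 1) / b = b ^ (n - 1) * (b + 1) := by
    have hbn : b ^ n = b ^ (n - 1) * b := by
      conv_lhs => rw [show n = (n - 1) + 1 by omega]
      rw [pow_succ]
    rw [hbn]; field_simp
  have hGle : ∀ a : ℝ, 0 < a → Gfun n p b a ≤ Gfun n p b b := by
    intro a ha
    have hy1 : (0:ℝ) < (b + 1) * n / a := div_pos (mul_pos hb1 hN) ha
    have hy2 : (0:ℝ) < ((a : ℝ) + 1) * n / a := div_pos (mul_pos (by linarith) hN) ha
    have hy3 : (0:ℝ) < (b + 1) * n / b := div_pos (mul_pos hb1 hN) hb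
    have hLpos : 0 < b ^ n * (b + 1) / a * Beta (p + 1) ((b + 1) * n / a) := by
      have := Beta_pos hq hy1
      positivity
    have hXpos : 0 < a ^ (n - 1) * (a + 1) * Beta (p + 1) ((a + 1) * n / a) := by
      have := Beta_pos hq hy2
      positivity
    have hYpos : 0 < b ^ (n - 1) * (b + 1) * Beta (p + 1) ((b + 1) * n / b) := by
      have := Beta_pos hq hy3
      positivity
    have hRpos : 0 < (a ^ (n - 1) * (a + 1) * Beta (p + 1) ((a + 1) * n / a)) ^ (p / ((n : ℝ) + p)) *
        (b ^ (n - 1) * (b + 1) * Beta (p + 1) ((b + 1) * n / b)) ^ ((n : ℝ) / ((n : ℝ) + p)) :=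
      mul_pos (Real.rpow_pos_of_pos hXpos _) (Real.rpow_pos_of_pos hYpos _)
    have hlog := (Real.log_le_log_iff hLpos hRpos).mpr (H a b ha hb)
    rw [Real.log_mul (Real.rpow_pos_of_pos hXpos _).ne' (Real.rpow_pos_of_pos hYpos _).ne',
      Real.log_rpow hXpos, Real.log_rpow hYpos] at hlog
    have hGa := hFG a ha
    have hGb := hFG b hb
    rw [hLb] at hGb
    have hcoe : 1 - p / ((n : ℝ) + p) = (n : ℝ) / ((n : ℝ) + p) := by field_simp; ring
    have hGb' : Gfun n p b b =
        ((n : ℝ) / ((n : ℝ) + p)) *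
          Real.log (b ^ (n - 1) * (b + 1) * Beta (p + 1) ((b + 1) * n / b)) := by
      rw [hGb, ← hcoe]; ring
    rw [hGa, hGb']
    linarith
  have hmax : IsLocalMax (Gfun n p b) b := by
    filter_upwards [Ioi_mem_nhds hb] with a ha using hGle a ha
  have hD0 := hmax.hasDerivAt_eq_zero (hasDerivAt_Gfun hn hp hb)
  -- algebra
  have harg2 : (n : ℝ) + (n : ℝ) / b = (b + 1) * n / b := by field_simp
  rw [harg2] at hD0
  have hm : ((n - 1 : ℕ) : ℝ) = (n : ℝ) - 1 := by
    rw [Nat.cast_sub hn, Nat.cast_one]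
  rw [hm] at hD0
  have h5 : (psi ((b + 1) * n / b) - psi ((b + 1) * n / b + (p + 1))) *
      (((b + 1) * n - p / ((n : ℝ) + p) * n) * (b ^ 2)⁻¹) =
      -(b⁻¹ + p / ((n : ℝ) + p) * (((n : ℝ) - 1) * b⁻¹ + (b + 1)⁻¹)) := by
    linear_combination -hD0
  have hθ1 : p / ((n : ℝ) + p) < 1 := (div_lt_one hNp).mpr (by linarith)
  have hApos : 0 < ((b + 1) * n - p / ((n : ℝ) + p) * n) * (b ^ 2)⁻¹ := by
    have h1 : (b + 1) * (n:ℝ) - p / ((n : ℝ) + p) * n > 0 := by nlinarith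
    positivity
  have hW : (0:ℝ) < (b + 1) * n / b := div_pos (mul_pos hb1 hN) hb
  have hWp : (0:ℝ) < (b + 1) * n / b + p := by linarith
  have hYne : ((b + 1) * (n:ℝ) / b * ((b + 1) * n / b + p)) ≠ 0 := (mul_pos hW hWp).ne'
  have hgoal2 : -(b⁻¹ + p / ((n : ℝ) + p) * (((n : ℝ) - 1) * b⁻¹ + (b + 1)⁻¹)) *
      ((b + 1) * (n:ℝ) / b * ((b + 1) * n / b + p)) =
      -((1 + p) * ((b + 1) * (n:ℝ) / b) + p) *
        (((b + 1) * (n:ℝ) - p / ((n : ℝ) + p) * n) * (b ^ 2)⁻¹) := by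
    field_simp
    ring
  have hgY : (psi ((b + 1) * n / b) - psi ((b + 1) * n / b + (p + 1))) *
      ((b + 1) * (n:ℝ) / b * ((b + 1) * n / b + p)) =
      -((1 + p) * ((b + 1) * (n:ℝ) / b) + p) := by
    apply mul_right_cancel₀ hApos.ne'
    calc (psi ((b + 1) * (n:ℝ) / b) - psi ((b + 1) * n / b + (p + 1))) *
        ((b + 1) * (n:ℝ) / b * ((b + 1) * n / b + p)) *
        (((b + 1) * (n:ℝ) - p / ((n : ℝ) + p) * n) * (b ^ 2)⁻¹)
        = (psi ((b + 1) * (n:ℝ) / b) - psi ((b + 1) * n / b + (p + 1))) *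
          (((b + 1) * (n:ℝ) - p / ((n : ℝ) + p) * n) * (b ^ 2)⁻¹) *
          ((b + 1) * (n:ℝ) / b * ((b + 1) * n / b + p)) := by ring
      _ = -(b⁻¹ + p / ((n : ℝ) + p) * (((n : ℝ) - 1) * b⁻¹ + (b + 1)⁻¹)) *
          ((b + 1) * (n:ℝ) / b * ((b + 1) * n / b + p)) := by rw [h5]
      _ = -((1 + p) * ((b + 1) * (n:ℝ) / b) + p) *
          (((b + 1) * (n:ℝ) - p / ((n : ℝ) + p) * n) * (b ^ 2)⁻¹) := hgoal2
  rw [show -(((1 + p) * ((b + 1) * (n:ℝ) / b) + p) /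
      ((b + 1) * (n:ℝ) / b * ((b + 1) * n / b + p))) =
      -((1 + p) * ((b + 1) * (n:ℝ) / b) + p) /
        ((b + 1) * (n:ℝ) / b * ((b + 1) * n / b + p)) from (neg_div _ _).symm,
    eq_div_iff hYne]
  exact hgY

/-- For every integer `n ≥ 1` and every real `p > 0` with `p ≠ 1`, there exist
`a, b > 0` with
`(bⁿ(b+1)/a)·B(p+1,(b+1)n/a) >
  (a^{n−1}(a+1)·B(p+1,(a+1)n/a))^{p/(n+p)} · (b^{n−1}(b+1)·B(p+1,(b+1)n/b))^{n/(n+p)}`;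
hence the optimal constant in the quaternionic `p`-energy estimate exceeds `1`. -/
theorem exists_energy_counterexample (n : ℕ) (hn : 1 ≤ n) (p : ℝ) (hp : 0 < p)
    (hp1 : p ≠ 1) :
    ∃ a b : ℝ, 0 < a ∧ 0 < b ∧
      (b ^ n * (b + 1) / a) * Beta (p + 1) ((b + 1) * n / a) >
        (a ^ (n - 1) * (a + 1) * Beta (p + 1) ((a + 1) * n / a)) ^ (p / ((n : ℝ) + p)) *
          (b ^ (n - 1) * (b + 1) * Beta (p + 1) ((b + 1) * n / b)) ^
            ((n : ℝ) / ((n : ℝ) + p)) := by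
  by_contra hcon
  push_neg at hcon
  have hN : (0:ℝ) < n := by exact_mod_cast Nat.lt_of_lt_of_le Nat.zero_lt_one hn
  have E1 := key n hn p hp hcon (n : ℝ) hN
  have E2 := key n hn p hp hcon ((n : ℝ) / 2) (half_pos hN)
  rw [show ((n:ℝ) + 1) * (n:ℝ) / (n:ℝ) = (n:ℝ) + 1 from by field_simp [hN.ne']] at E1
  rw [show ((n:ℝ)/2 + 1) * (n:ℝ) / ((n:ℝ)/2) = (n:ℝ) + 2 from by field_simp [hN.ne']] at E2
  have R3 := psi_add_one (show (0:ℝ) < (n:ℝ) + 1 by linarith)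
  rw [show ((n:ℝ) + 1) + 1 = (n:ℝ) + 2 from by ring] at R3
  have R4 := psi_add_one (show (0:ℝ) < (n:ℝ) + 1 + (p + 1) by linarith)
  rw [show ((n:ℝ) + 1 + (p + 1)) + 1 = (n:ℝ) + 2 + (p + 1) from by ring] at R4
  have hne1 : ((n:ℝ) + 1) ≠ 0 := by linarith
  have hne2 : ((n:ℝ) + 2) ≠ 0 := by linarith
  have hne3 : ((n:ℝ) + 1 + p) ≠ 0 := by linarith
  have hne4 : ((n:ℝ) + 2 + p) ≠ 0 := by linarith
  have hne5 : ((n:ℝ) + 1 + (p + 1)) ≠ 0 := by linarith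
  have hiden : -(((1 + p) * ((n:ℝ) + 2) + p) / (((n:ℝ) + 2) * ((n:ℝ) + 2 + p)))
      - -(((1 + p) * ((n:ℝ) + 1) + p) / (((n:ℝ) + 1) * ((n:ℝ) + 1 + p)))
      - (1 / ((n:ℝ) + 1) - 1 / ((n:ℝ) + 1 + (p + 1)))
      = p * (1 - p) / (((n:ℝ) + 2) * ((n:ℝ) + 1 + p) * ((n:ℝ) + 2 + p)) := by
    field_simp
    ring
  have hzero : p * (1 - p) / (((n:ℝ) + 2) * ((n:ℝ) + 1 + p) * ((n:ℝ) + 2 + p)) = 0 := by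
    rw [← hiden]
    linarith [E1, E2, R3, R4]
  have hden : 0 < ((n:ℝ) + 2) * ((n:ℝ) + 1 + p) * ((n:ℝ) + 2 + p) :=
    mul_pos (mul_pos (by linarith) (by linarith)) (by linarith)
  have hnum : p * (1 - p) = 0 := by
    rcases div_eq_zero_iff.mp hzero with h | h
    · exact h
    · exact absurd h hden.ne'
  rcases mul_eq_zero.mp hnum with h | h
  · exact absurd h hp.ne'
  · exact hp1 (by linarith)
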